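/- Every semigroup that has neither N_2^ℓ nor N_2^r among its divisors and contains neither the 2-element right zero semigroup R_2 nor the 2-element left zero semigroup L_2 as a subsemigroup is a semigroup with central idempotents, i.e., es = se for every idempotent e and every element s. -/

import Mathlib

/-- The 3-element semigroup N₂ˡ = {e,a,0}: e²=e, ea=a, other products 0. -/
inductive N2l | e | a | z
  deriving DecidableEq

instance : Fintype N2l := Fintype.ofList [.e, .a, .z] (by intro x; cases x <;> simp)

instance : Mul N2l :=
  ⟨fun x y => match x, y with
    | .e, .e => .e
    | .e, .a => .a
    | _, _ => .z⟩

instance : Semigroup N2l := ⟨by decide⟩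

/-- The 3-element semigroup N₂ʳ = {e,a,0}: e²=e, ae=a, other products 0. -/
inductive N2r | e | a | z
  deriving DecidableEq

instance : Fintype N2r := Fintype.ofList [.e, .a, .z] (by intro x; cases x <;> simp)

instance : Mul N2r :=
  ⟨fun x y => match x, y with
    | .e, .e => .e
    | .a, .e => .a
    | _, _ => .z⟩

instance : Semigroup N2r := ⟨by decide⟩

/-- The 2-element right zero semigroup. -/
inductive R2 | x | y
  deriving DecidableEq

instance : Fintype R2 := Fintype.ofList [.x, .y] (by intro x; cases x <;> simp)

instance : Mul R2 := ⟨fun _ b => b⟩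

instance : Semigroup R2 := ⟨fun _ _ _ => rfl⟩

/-- The 2-element left zero semigroup. -/
inductive L2 | x | y
  deriving DecidableEq

instance : Fintype L2 := Fintype.ofList [.x, .y] (by intro x; cases x <;> simp)

instance : Mul L2 := ⟨fun a _ => a⟩

instance : Semigroup L2 := ⟨fun _ _ _ => rfl⟩

/-- `D` is a divisor of `S`: a homomorphic image of a subsemigroup of `S`. -/
def IsDivisorOf (D S : Type*) [Semigroup D] [Semigroup S] : Prop :=
  ∃ (T : Subsemigroup S) (f : T →ₙ* D), Function.Surjective f

/-- Powers of `a`: `pwa a n = a^(n+1)`. -/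
def pwa {S : Type*} [Semigroup S] (a : S) : ℕ → S
  | 0 => a
  | n + 1 => a * pwa a n

section Key

variable {S : Type*} [Semigroup S]

theorem pwa_succ (a : S) (n : ℕ) : pwa a (n + 1) = a * pwa a n := rfl

theorem pwa_comm (a : S) (n : ℕ) : a * pwa a n = pwa a n * a := by
  induction n with
  | zero => rfl
  | succ n ih => rw [pwa_succ, ih, ← mul_assoc, ih]

theorem pwa_add (a : S) (m n : ℕ) : pwa a m * pwa a n = pwa a (m + n + 1) := by
  induction m with
  | zero =>
    show a * pwa a n = _
    rw [pwa_comm]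
    simp [pwa_succ, pwa_comm, Nat.add_comm]
  | succ m ih =>
    rw [pwa_succ, mul_assoc, ih]
    show a * pwa a (m + n + 1) = pwa a (m + 1 + n + 1)
    rw [← pwa_succ]
    congr 1
    omega

/-- The obvious bijection `N2l → N2r` (an anti-isomorphism). -/
def cvLR : N2l → N2r := fun t => match t with | .e => .e | .a => .a | .z => .z

theorem cvLR_anti : ∀ u v : N2l, cvLR (u * v) = cvLR v * cvLR u := by decide

theorem cvLR_surj : Function.Surjective cvLR := by decide

/-- Key lemma: no `N2l` divisor and no `R2` subsemigroup force
`e*a = a → a*e = a` for idempotent `e`. -/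
theorem key (hN : ¬ IsDivisorOf N2l S)
    (hR : ¬ ∃ f : R2 →ₙ* S, Function.Injective f) :
    ∀ e a : S, e * e = e → e * a = a → a * e = a := by
  classical
  intro e a he hea
  by_contra hne
  -- e is a left identity on all "powers"
  have h1 : ∀ n, e * pwa a n = pwa a n := by
    intro n
    induction n with
    | zero => exact hea
    | succ n ih => rw [pwa_succ, ← mul_assoc, hea]
  have a_ne_e : a ≠ e := by
    intro h
    apply hne
    rw [h, he, ← h]
  -- powers are never `e`
  have pne : ∀ n, pwa a n ≠ e := by
    intro n h
    apply hne
    have h2 : a * e = pwa a (n + 1) := by rw [← h]; rfl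
    rw [h2, pwa_succ, pwa_comm, h, hea]
  -- higher powers are never `a` (else we build an R2 subsemigroup)
  have pna : ∀ n, pwa a (n + 1) ≠ a := by
    intro n h
    have per : ∀ j, pwa a (n + 1 + j) = pwa a j := by
      intro j
      induction j with
      | zero => exact h
      | succ j ih =>
        have : n + 1 + (j + 1) = (n + 1 + j) + 1 := by omega
        rw [this, pwa_succ, ih, pwa_succ]
    set g := pwa a n with hgdef
    have hg : g * g = g := by
      rw [hgdef, pwa_add]
      have : n + n + 1 = n + 1 + n := by omega
      rw [this, per]
    set u := g * e with hudef
    have hu : u * u = u := by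
      rw [hudef, mul_assoc, ← mul_assoc e g e, h1, ← mul_assoc, hg]
    have hgu : g * u = u := by rw [hudef, ← mul_assoc, hg]
    have hug : u * g = g := by rw [hudef, mul_assoc, h1, hg]
    have hgne : g ≠ u := by
      intro h'
      rw [hudef] at h'
      apply hne
      have e1 : a * g = a := by rw [hgdef, ← pwa_succ, h]
      calc a * e = (a * g) * e := by rw [e1]
      _ = a * (g * e) := by rw [mul_assoc]
      _ = a * g := by rw [← h']
      _ = a := e1
    apply hR
    refine ⟨⟨fun t => match t with | .x => g | .y => u, ?_⟩, ?_⟩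
    · intro p q
      cases p <;> cases q <;> simp only [] <;>
        first
          | exact hg.symm
          | exact hgu.symm
          | exact hug.symm
          | exact hu.symm
    · intro p q hpq
      cases p <;> cases q <;>
        first
          | rfl
          | exact absurd hpq hgne
          | exact absurd hpq.symm hgne
  -- pwa n * e is never a
  have pea : ∀ n, pwa a n * e ≠ a := by
    intro n h
    apply hne
    calc a * e = (pwa a n * e) * e := by rw [h]
    _ = pwa a n * e := by rw [mul_assoc, he]
    _ = a := h
  -- pwa n * e is never e
  have pee : ∀ n, pwa a n * e ≠ e := by
    intro n h
    refine pna n ?_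
    calc pwa a (n + 1) = a * pwa a n := rfl
    _ = pwa a n * a := pwa_comm a n
    _ = (pwa a n * e) * a := by rw [mul_assoc, hea]
    _ = e * a := by rw [h]
    _ = a := hea
  -- the subsemigroup generated by e and a
  set T : Subsemigroup S :=
    { carrier := {x | x = e ∨ ∃ n, x = pwa a n ∨ x = pwa a n * e}
      mul_mem' := by
        rintro x y (rfl | ⟨m, rfl | rfl⟩) (rfl | ⟨n, rfl | rfl⟩)
        · exact Or.inl he
        · exact Or.inr ⟨n, Or.inl (h1 n)⟩
        · exact Or.inr ⟨n, Or.inr (by rw [← mul_assoc, h1])⟩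
        · exact Or.inr ⟨m, Or.inr rfl⟩
        · exact Or.inr ⟨m + n + 1, Or.inl (pwa_add a m n)⟩
        · exact Or.inr ⟨m + n + 1, Or.inr (by rw [← mul_assoc, pwa_add])⟩
        · exact Or.inr ⟨m, Or.inr (by rw [mul_assoc, he])⟩
        · exact Or.inr ⟨m + n + 1, Or.inl (by rw [mul_assoc, h1, pwa_add])⟩
        · exact Or.inr ⟨m + n + 1, Or.inr
            (by rw [mul_assoc, ← mul_assoc e, h1, ← mul_assoc, pwa_add])⟩ } with hT
  set fc : S → N2l := fun s => if s = e then N2l.e else if s = a then N2l.a else N2l.z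
    with hfc
  -- values of fc
  have fce : fc e = N2l.e := if_pos rfl
  have fca : fc a = N2l.a := by simp only [hfc]; simp [a_ne_e]
  have fcpe : ∀ n, fc (pwa a n * e) = N2l.z := by
    intro n; simp only [hfc]; simp [pee n, pea n]
  have fcp1 : ∀ n, fc (pwa a (n + 1)) = N2l.z := by
    intro n; simp only [hfc]; simp [pne (n + 1), pna n]
  have fcp : ∀ n, fc (pwa a n) = N2l.a ∨ fc (pwa a n) = N2l.z := by
    intro n
    cases n with
    | zero => exact Or.inl fca
    | succ n => exact Or.inr (fcp1 n)
  have fmul : ∀ x y : T, fc ((x * y : T) : S) = fc (x : S) * fc (y : S) := by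
    rintro ⟨x, hx⟩ ⟨y, hy⟩
    show fc (x * y) = fc x * fc y
    rcases hx with rfl | ⟨m, rfl | rfl⟩ <;> rcases hy with rfl | ⟨n, rfl | rfl⟩
    · rw [he, fce]; rfl
    · rw [h1, fce]
      rcases fcp n with h | h <;> rw [h] <;> rfl
    · rw [← mul_assoc, h1, fce, fcpe]; rfl
    · rw [fcpe, fce]
      rcases fcp m with h | h <;> rw [h] <;> rfl
    · rw [pwa_add, fcp1]
      rcases fcp m with h | h <;> rcases fcp n with h' | h' <;>
        rw [h, h'] <;> rfl
    · rw [← mul_assoc, pwa_add, fcpe, fcpe]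
      rcases fcp m with h | h <;> rw [h] <;> rfl
    · rw [mul_assoc, he, fcpe, fce]; rfl
    · rw [mul_assoc, h1, pwa_add, fcp1, fcpe]
      rcases fcp n with h | h <;> rw [h] <;> rfl
    · rw [mul_assoc, ← mul_assoc e, h1, ← mul_assoc, pwa_add, fcpe, fcpe, fcpe]; rfl
  apply hN
  refine ⟨T, ⟨fun t => fc (t : S), fmul⟩, ?_⟩
  intro d
  cases d with
  | e => exact ⟨⟨e, Or.inl rfl⟩, fce⟩
  | a => exact ⟨⟨a, Or.inr ⟨0, Or.inl rfl⟩⟩, fca⟩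
  | z => exact ⟨⟨a * e, Or.inr ⟨0, Or.inr rfl⟩⟩, fcpe 0⟩

end Key

/-- A semigroup with neither N₂ˡ nor N₂ʳ among its divisors and containing
neither R₂ nor L₂ as a subsemigroup has central idempotents. -/
theorem stmt_9 (S : Type*) [Semigroup S]
    (h1 : ¬ IsDivisorOf N2l S) (h2 : ¬ IsDivisorOf N2r S)
    (h3 : ¬ ∃ f : R2 →ₙ* S, Function.Injective f)
    (h4 : ¬ ∃ f : L2 →ₙ* S, Function.Injective f) :
    ∀ e s : S, e * e = e → e * s = s * e := by
  -- transported hypotheses for the opposite semigroup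
  have hR' : ¬ ∃ f : R2 →ₙ* Sᵐᵒᵖ, Function.Injective f := by
    rintro ⟨f, hf⟩
    apply h4
    refine ⟨⟨fun t => (f (match t with | .x => .x | .y => .y)).unop, ?_⟩, ?_⟩
    · intro p q
      have key : ∀ p' q' : R2, (f p').unop = (f p').unop * (f q').unop := by
        intro p' q'
        have := f.map_mul q' p'
        have hqp : (q' * p' : R2) = p' := rfl
        rw [hqp] at this
        calc (f p').unop = (f q' * f p').unop := by rw [← this]
        _ = (f p').unop * (f q').unop := rfl
      cases p <;> cases q <;> exact key _ _
    · intro p q hpq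
      have := hf (MulOpposite.unop_injective hpq)
      cases p <;> cases q <;> simp_all
  have hN' : ¬ IsDivisorOf N2l Sᵐᵒᵖ := by
    rintro ⟨T, f, hf⟩
    apply h2
    set T' : Subsemigroup S :=
      { carrier := {x | MulOpposite.op x ∈ T}
        mul_mem' := by
          intro x y hx hy
          show MulOpposite.op (x * y) ∈ T
          rw [MulOpposite.op_mul]
          exact mul_mem hy hx } with hT'
    refine ⟨T', ⟨fun t => cvLR (f ⟨MulOpposite.op (t : S), t.2⟩), ?_⟩, ?_⟩
    · rintro ⟨x, hx⟩ ⟨y, hy⟩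
      show cvLR (f ⟨MulOpposite.op (x * y), _⟩) = _
      have hxy : (⟨MulOpposite.op (x * y), mul_mem hy hx⟩ : T)
          = ⟨MulOpposite.op y, hy⟩ * ⟨MulOpposite.op x, hx⟩ := by
        apply Subtype.ext
        rfl
      rw [hxy, f.map_mul, cvLR_anti]
    · intro d
      obtain ⟨l, hl⟩ := cvLR_surj d
      obtain ⟨t, ht⟩ := hf l
      refine ⟨⟨(t : Sᵐᵒᵖ).unop, ?_⟩, ?_⟩
      · show MulOpposite.op (t : Sᵐᵒᵖ).unop ∈ T
        rw [MulOpposite.op_unop]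
        exact t.2
      · show cvLR (f ⟨MulOpposite.op (t : Sᵐᵒᵖ).unop, _⟩) = d
        have : (⟨MulOpposite.op (t : Sᵐᵒᵖ).unop, by rw [MulOpposite.op_unop]; exact t.2⟩ : T)
            = t := by
          apply Subtype.ext
          exact MulOpposite.op_unop _
        rw [this, ht, hl]
  intro e s he
  -- e * s = e * s * e
  have step1 : (e * s) * e = e * s := by
    apply key h1 h3 e (e * s) he
    rw [← mul_assoc, he]
  -- s * e = e * (s * e)
  have step2 : e * (s * e) = s * e := by
    have := key hN' hR' (MulOpposite.op e) (MulOpposite.op (s * e))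
      (by rw [← MulOpposite.op_mul, he])
      (by
        show MulOpposite.op ((s * e) * e) = MulOpposite.op (s * e)
        rw [mul_assoc, he])
    have h' : MulOpposite.op (e * (s * e)) = MulOpposite.op (s * e) := this
    exact MulOpposite.op_injective h'
  rw [← step2, ← mul_assoc, step1]
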